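/- Let G and K be groups and let S be a subgroup of the free product G ∗ K. If the word length function of G ∗ K (with respect to the free product decomposition) is bounded on S, then S is conjugate in G ∗ K to a subgroup of G or to a subgroup of K. -/

import Mathlib

open Monoid Monoid.CoprodI

set_option linter.unusedSectionVars false

namespace Stmt0Aux

variable {ι : Type*} [DecidableEq ι] {M : ι → Type*} [∀ i, Group (M i)]
  [∀ i, DecidableEq (M i)]

/-- product of a list of letters -/
def prodL (L : List (Σ i, M i)) : CoprodI M := (L.map fun l => of l.2).prod

/-- reducedness of a list of letters -/
def Red (L : List (Σ i, M i)) : Prop :=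
  (∀ l ∈ L, l.2 ≠ 1) ∧ L.Chain' fun a b => a.1 ≠ b.1

/-- word length -/
noncomputable def ℓ (x : CoprodI M) : ℕ := (Word.equiv x).toList.length

theorem prodL_nil : prodL ([] : List (Σ i, M i)) = 1 := rfl

theorem prodL_cons (a : Σ i, M i) (L : List (Σ i, M i)) :
    prodL (a :: L) = of a.2 * prodL L := by simp [prodL]

theorem prodL_append (L₁ L₂ : List (Σ i, M i)) :
    prodL (L₁ ++ L₂) = prodL L₁ * prodL L₂ := by simp [prodL]

theorem prodL_singleton (a : Σ i, M i) : prodL [a] = of a.2 := by simp [prodL]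

theorem red_nil : Red ([] : List (Σ i, M i)) := ⟨by simp, List.isChain_nil⟩

theorem red_cons {a : Σ i, M i} {L : List (Σ i, M i)} :
    Red (a :: L) ↔ a.2 ≠ 1 ∧ (∀ y ∈ L.head?, a.1 ≠ y.1) ∧ Red L := by
  simp only [Red, List.mem_cons, List.Chain', List.isChain_cons]
  constructor
  · rintro ⟨h1, h2, h3⟩
    exact ⟨h1 _ (Or.inl rfl), h2, fun l hl => h1 l (Or.inr hl), h3⟩
  · rintro ⟨h1, h2, h3, h4⟩
    exact ⟨by rintro l (rfl | hl); exacts [h1, h3 l hl], h2, h4⟩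

theorem red_append {L₁ L₂ : List (Σ i, M i)} :
    Red (L₁ ++ L₂) ↔ Red L₁ ∧ Red L₂ ∧ ∀ x ∈ L₁.getLast?, ∀ y ∈ L₂.head?, x.1 ≠ y.1 := by
  simp only [Red, List.mem_append, List.Chain', List.isChain_append]
  constructor
  · rintro ⟨h1, h2, h3, h4⟩
    exact ⟨⟨fun l hl => h1 l (Or.inl hl), h2⟩, ⟨fun l hl => h1 l (Or.inr hl), h3⟩, h4⟩
  · rintro ⟨⟨h1, h2⟩, ⟨h3, h4⟩, h5⟩
    exact ⟨by rintro l (hl | hl); exacts [h1 l hl, h3 l hl], h2, h4, h5⟩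

theorem word_prod_equiv (x : CoprodI M) : Word.prod (Word.equiv x) = x :=
  (Word.equiv).symm_apply_apply x

theorem equiv_word_prod (w : Word M) : Word.equiv (Word.prod w) = w :=
  (Word.equiv).apply_symm_apply w

theorem len_prodL {L : List (Σ i, M i)} (h : Red L) : ℓ (prodL L) = L.length := by
  have : prodL L = Word.prod ⟨L, h.1, h.2⟩ := rfl
  rw [this, ℓ, equiv_word_prod]

theorem ℓ_one : ℓ (1 : CoprodI M) = 0 := len_prodL red_nil

theorem eq_one_of_ℓ_eq_zero {x : CoprodI M} (h : ℓ x = 0) : x = 1 := by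
  have h0 : (Word.equiv x).toList = [] := List.length_eq_zero_iff.1 h
  have : Word.equiv x = Word.empty := Word.ext h0
  rw [← word_prod_equiv x, this, Word.prod_empty]

theorem prodL_eq (x : CoprodI M) : prodL (Word.equiv x).toList = x := word_prod_equiv x

theorem red_eq (x : CoprodI M) : Red (Word.equiv x).toList :=
  ⟨(Word.equiv x).ne_one, (Word.equiv x).chain_ne⟩

theorem ℓ_eq (x : CoprodI M) : ℓ x = (Word.equiv x).toList.length := rfl


variable {ι : Type*} [DecidableEq ι] {M : ι → Type*} [∀ i, Group (M i)]
  [∀ i, DecidableEq (M i)]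

theorem rcons_length {i} (p : Word.Pair M i) :
    (Word.rcons p).toList.length =
      if p.head = 1 then p.tail.toList.length else p.tail.toList.length + 1 := by
  rw [Word.rcons]
  split <;> simp [Word.cons]

theorem length_of_smul_le (i : ι) (m : M i) (w : Word M) :
    (of m • w).toList.length ≤ w.toList.length + 1 := by
  have hw : Word.rcons (Word.equivPair i w) = w := by
    rw [← Word.equivPair_symm]; exact (Word.equivPair i).symm_apply_apply w
  have h1 : w.toList.length =
      if (Word.equivPair i w).head = 1 then (Word.equivPair i w).tail.toList.length
      else (Word.equivPair i w).tail.toList.length + 1 := by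
    conv_lhs => rw [← hw]
    exact rcons_length _
  rw [Word.of_smul_def, rcons_length]
  dsimp only
  split <;> split_ifs at h1 <;> omega

theorem ℓ_of_mul_le {i : ι} (m : M i) (y : CoprodI M) : ℓ (of m * y) ≤ ℓ y + 1 := by
  have : Word.equiv (of m * y) = of m • Word.equiv y := mul_smul (of m) y (Word.empty : Word M)
  rw [ℓ_eq, this]
  exact length_of_smul_le i m (Word.equiv y)

theorem ℓ_listprod_le (l : List (CoprodI M)) (hl : ∀ x ∈ l, ∃ i, ∃ m : M i, x = of m) :
    ℓ l.prod ≤ l.length := by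
  induction l with
  | nil => simpa using ℓ_one.le
  | cons a l ih =>
    obtain ⟨i, m, rfl⟩ := hl a (by simp)
    rw [List.prod_cons]
    calc ℓ (of m * l.prod) ≤ ℓ l.prod + 1 := ℓ_of_mul_le m l.prod
    _ ≤ l.length + 1 := by
        have := ih fun x hx => hl x (List.mem_cons_of_mem _ hx)
        omega
    _ = (of (M := M) m :: l).length := by simp

theorem red_singleton {a : Σ i, M i} (h : a.2 ≠ 1) : Red [a] :=
  ⟨by simpa using h, List.isChain_singleton _⟩

theorem red_cons_concat {x y : Σ i, M i} {Mid : List (Σ i, M i)} (hx : x.2 ≠ 1) (hy : y.2 ≠ 1)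
    (hred : Red Mid) (hh : ∀ l ∈ Mid.head?, x.1 ≠ l.1) (hl : ∀ l ∈ Mid.getLast?, l.1 ≠ y.1)
    (hxy : Mid = [] → x.1 ≠ y.1) : Red (x :: (Mid ++ [y])) := by
  rw [red_cons]
  refine ⟨hx, ?_, ?_⟩
  · cases Mid with
    | nil => intro z hz; simp at hz; subst hz; exact hxy rfl
    | cons c Mid' =>
      intro z hz
      rw [List.head?_append_of_ne_nil _ (by simp)] at hz
      exact hh z hz
  · rw [red_append]
    refine ⟨hred, red_singleton hy, fun l hl' z hz => ?_⟩
    simp at hz; subst hz; exact hl l hl'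

theorem prodL_cons_concat (x y : Σ i, M i) (Mid : List (Σ i, M i)) :
    prodL (x :: (Mid ++ [y])) = of x.2 * prodL Mid * of y.2 := by
  rw [prodL_cons, prodL_append, prodL_singleton, mul_assoc]

theorem pow_aux1 {L : List (Σ i, M i)} (hred : Red L) (hne : L ≠ [])
    (hjunc : ∀ x ∈ L.getLast?, ∀ y ∈ L.head?, x.1 ≠ y.1) (m : ℕ) :
    ∃ J : List (Σ i, M i), (prodL L) ^ m = prodL J ∧ Red J ∧ J.length = m * L.length ∧
      (J.head? = L.head? ∨ J = []) := by
  induction m with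
  | zero => exact ⟨[], by simp [prodL_nil], red_nil, by simp, Or.inr rfl⟩
  | succ m ih =>
    obtain ⟨J, hJ, hJred, hJlen, hJhead⟩ := ih
    refine ⟨L ++ J, ?_, ?_, ?_, Or.inl (List.head?_append_of_ne_nil _ hne)⟩
    · rw [pow_succ', hJ, prodL_append]
    · rw [red_append]
      refine ⟨hred, hJred, fun x hx y hy => ?_⟩
      rcases hJhead with h | rfl
      · exact hjunc x hx y (h ▸ hy)
      · simp at hy
    · simp [hJlen]; ring

theorem pow_aux2 {i : ι} {a b : M i} {Mid : List (Σ i, M i)}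
    (hc : b * a ≠ 1) (hMne : Mid ≠ []) (hMred : Red Mid)
    (hhead : ∀ y ∈ Mid.head?, y.1 ≠ i) (hlast : ∀ x ∈ Mid.getLast?, x.1 ≠ i) (m : ℕ) :
    ∃ K : List (Σ i, M i),
      (of a * prodL Mid * of b) ^ (m + 1) = of a * prodL K * of b ∧ Red K ∧
        K.head? = Mid.head? ∧ (∀ x ∈ K.getLast?, x.1 ≠ i) ∧ m + Mid.length ≤ K.length := by
  induction m with
  | zero => exact ⟨Mid, by rw [pow_one], hMred, rfl, hlast, by omega⟩
  | succ m ih =>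
    obtain ⟨K, hK, hKred, hKhead, hKlast, hKlen⟩ := ih
    have hKne : K ≠ [] := by
      intro h
      rw [h] at hKhead
      cases Mid with
      | nil => exact hMne rfl
      | cons c Mid' => simp at hKhead
    refine ⟨K ++ ⟨i, b * a⟩ :: Mid, ?_, ?_, ?_, ?_, ?_⟩
    · rw [pow_succ, hK]
      rw [prodL_append, prodL_cons]
      have : of (M := M) b * of a = of (b * a) := by rw [← map_mul]
      calc (of a * prodL K * of b) * (of a * prodL Mid * of b)
          = of a * (prodL K * (of b * of a) * prodL Mid) * of b := by
            simp [mul_assoc]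
        _ = of a * (prodL K * (of ((⟨i, b*a⟩ : Σ i, M i).2) * prodL Mid)) * of b := by
            rw [this]; simp [mul_assoc]
    · rw [red_append, red_cons]
      refine ⟨hKred, ⟨hc, fun y hy => (hhead y hy).symm, hMred⟩, fun x hx y hy => ?_⟩
      simp only [List.head?_cons, Option.mem_def, Option.some.injEq] at hy
      subst hy
      exact hKlast x hx
    · rw [List.head?_append_of_ne_nil _ hKne, hKhead]
    · intro x hx
      rw [List.getLast?_append_of_ne_nil _ (by simp)] at hx
      obtain ⟨c, Mid', rfl⟩ := List.exists_cons_of_ne_nil hMne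
      rw [List.getLast?_cons_cons] at hx
      exact hlast x hx
    · simp; omega

theorem conj_form {n : ℕ} {S : Subgroup (CoprodI M)} (hb : ∀ s ∈ S, ℓ s ≤ n)
    {s : CoprodI M} (hs : s ∈ S) (h2 : 2 ≤ ℓ s) :
    ∃ (i : ι) (a : M i) (Mid : List (Σ i, M i)), a ≠ 1 ∧ Red Mid ∧ Mid ≠ [] ∧
      (∀ l ∈ Mid.head?, l.1 ≠ i) ∧ (∀ l ∈ Mid.getLast?, l.1 ≠ i) ∧
      s = of a * prodL Mid * of a⁻¹ ∧ ℓ s = Mid.length + 2 := by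
  have hsL : prodL (Word.equiv s).toList = s := prodL_eq s
  have hredL : Red (Word.equiv s).toList := red_eq s
  have hlen : ℓ s = (Word.equiv s).toList.length := rfl
  have hLne : (Word.equiv s).toList ≠ [] := by
    intro h; rw [h] at hlen; simp at hlen; omega
  obtain ⟨x, rest, hLx⟩ := List.exists_cons_of_ne_nil hLne
  have hrestne : rest ≠ [] := by
    intro h; rw [hLx, h] at hlen; simp at hlen; omega
  obtain ⟨Mid, y, hMidy⟩ := (List.eq_nil_or_concat rest).resolve_left hrestne
  rw [List.concat_eq_append] at hMidy
  subst hMidy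
  rw [hLx] at hsL hredL hlen
  by_cases hxy : x.1 = y.1
  case neg =>
    exfalso
    have hjunc : ∀ p ∈ (x :: (Mid ++ [y])).getLast?, ∀ q ∈ (x :: (Mid ++ [y])).head?,
        p.1 ≠ q.1 := by
      intro p hp q hq
      rw [show x :: (Mid ++ [y]) = (x :: Mid) ++ [y] by simp, List.getLast?_concat] at hp
      simp only [Option.mem_def, Option.some.injEq] at hp
      simp only [List.head?_cons, Option.mem_def, Option.some.injEq] at hq
      subst hp; subst hq
      exact fun h => hxy h.symm
    obtain ⟨J, hJ, hJred, hJlen, -⟩ := pow_aux1 hredL (by simp) hjunc (n + 1)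
    have hmem : s ^ (n + 1) ∈ S := pow_mem hs _
    have hb' := hb _ hmem
    rw [← hsL, hJ, len_prodL hJred] at hb'
    rw [hJlen] at hb'
    have : (x :: (Mid ++ [y])).length ≥ 2 := by simp
    nlinarith
  case pos =>
    obtain ⟨i, a⟩ := x
    obtain ⟨i', b⟩ := y
    dsimp at hxy
    subst hxy
    have hMidne : Mid ≠ [] := by
      rintro rfl
      have := hredL.2
      simp [List.Chain'] at this
    have hred' := hredL
    rw [red_cons, red_append] at hred'
    obtain ⟨ha1, hh, hMred, hyred, hjunc2⟩ := hred'
    have hb1 : b ≠ 1 := by simpa using hyred.1 ⟨i, b⟩ (by simp)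
    have hlast : ∀ l ∈ Mid.getLast?, l.1 ≠ i := by
      intro l hl
      simpa using hjunc2 l hl ⟨i, b⟩ (by simp)
    have hhead : ∀ l ∈ Mid.head?, l.1 ≠ i := by
      intro l hl
      have := hh l (by rw [List.head?_append_of_ne_nil _ hMidne]; exact hl)
      exact fun h => this h.symm
    have hseq : s = of a * prodL Mid * of b := by
      rw [← hsL, prodL_cons_concat]
    by_cases hba : b * a = 1
    case pos =>
      have hbinv : b = a⁻¹ := eq_inv_of_mul_eq_one_left hba
      refine ⟨i, a, Mid, ha1, hMred, hMidne, hhead, hlast, by rw [hseq, hbinv], ?_⟩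
      rw [hlen]; simp
    case neg =>
      exfalso
      obtain ⟨Kl, hK, hKred, hKhead, hKlast, hKlen⟩ :=
        pow_aux2 (i := i) (a := a) (b := b) hba hMidne hMred hhead hlast n
      have hKne : Kl ≠ [] := by
        intro h
        rw [h] at hKhead
        obtain ⟨c, Mid', rfl⟩ := List.exists_cons_of_ne_nil hMidne
        simp at hKhead
      have hbig : Red ((⟨i, a⟩ : Σ i, M i) :: (Kl ++ [⟨i, b⟩])) := by
        refine red_cons_concat ha1 hb1 hKred ?_ hKlast fun h => absurd h hKne
        intro l hl
        rw [hKhead] at hl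
        exact (hhead l hl).symm
      have heq : s ^ (n + 1) = prodL ((⟨i, a⟩ : Σ i, M i) :: (Kl ++ [⟨i, b⟩])) := by
        rw [prodL_cons_concat, hseq, ← hK]
      have hmem : s ^ (n + 1) ∈ S := pow_mem hs _
      have hb' := hb _ hmem
      rw [heq, len_prodL hbig] at hb'
      simp at hb'
      omega

theorem ℓ_of_le {i : ι} (m : M i) : ℓ (of m) ≤ 1 := by
  by_cases h : m = 1
  · subst h; rw [map_one, ℓ_one]; omega
  · have he : of m = prodL [⟨i, m⟩] := (prodL_singleton (⟨i, m⟩ : Σ i, M i)).symm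
    rw [he, len_prodL (red_singleton h)]
    simp

theorem eq_of_ℓ_eq_one {s : CoprodI M} (h : ℓ s = 1) : ∃ i, ∃ b : M i, b ≠ 1 ∧ s = of b := by
  have hsL : prodL (Word.equiv s).toList = s := prodL_eq s
  have hredL : Red (Word.equiv s).toList := red_eq s
  obtain ⟨l, hl⟩ := List.length_eq_one_iff.1 h
  rw [hl] at hsL hredL
  exact ⟨l.1, l.2, hredL.1 l (by simp), by rw [← hsL, prodL_singleton]⟩

open Classical in
theorem core [Nonempty ι] (n : ℕ) :
    ∀ S : Subgroup (CoprodI M), (∀ s ∈ S, ℓ s ≤ n) →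
      ∃ (i : ι) (z : CoprodI M), ∀ s ∈ S, ∃ m : M i, of m = z * s * z⁻¹ := by
  induction n using Nat.strong_induction_on with
  | _ n IH =>
  intro S hb
  by_cases hA : ∀ s ∈ S, ℓ s ≤ 1
  · by_cases hT : ∃ s₀ ∈ S, ℓ s₀ = 1
    · obtain ⟨s₀, hs₀S, hs₀⟩ := hT
      obtain ⟨i, a, ha, rfl⟩ := eq_of_ℓ_eq_one hs₀
      refine ⟨i, 1, fun s hsS => ?_⟩
      rcases Nat.lt_or_ge (ℓ s) 1 with h | h
      · have h' : s = 1 := eq_one_of_ℓ_eq_zero (Nat.lt_one_iff.mp h)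
        exact ⟨1, by simp [h']⟩
      · have h1 : ℓ s = 1 := le_antisymm (hA s hsS) h
        obtain ⟨j, b, hbne, rfl⟩ := eq_of_ℓ_eq_one h1
        by_cases hij : j = i
        · subst hij; exact ⟨b, by simp⟩
        · exfalso
          have hmem : of a * of b ∈ S := mul_mem hs₀S hsS
          have hred2 : Red [(⟨i, a⟩ : Σ i, M i), ⟨j, b⟩] := by
            constructor
            · rintro l hl
              simp only [List.mem_cons, List.mem_singleton] at hl
              rcases hl with rfl | rfl | h
              · exact ha
              · exact hbne
              · simp at h
            · simpa [List.Chain'] using fun h => hij h.symm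
          have h2 : ℓ (of (M := M) a * of b) = 2 := by
            have he : of (M := M) a * of b = prodL [⟨i, a⟩, ⟨j, b⟩] := by
              rw [prodL_cons, prodL_singleton]
            rw [he, len_prodL hred2]
            rfl
          have := hA _ hmem; omega
    · push_neg at hT
      refine ⟨Classical.arbitrary ι, 1, fun s hsS => ?_⟩
      have h0 : ℓ s = 0 := by
        have h1 := hA s hsS
        have h2 := hT s hsS
        omega
      have h' : s = 1 := eq_one_of_ℓ_eq_zero h0
      exact ⟨1, by simp [h']⟩
  · push_neg at hA
    obtain ⟨t, htS, ht⟩ := hA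
    have htn : ℓ t ≤ n := hb t htS
    set P : ℕ → Prop := fun m => ∃ s ∈ S, m ≤ ℓ s with hPdef
    have hPt : P (ℓ t) := ⟨t, htS, le_rfl⟩
    set Mx := Nat.findGreatest P n with hMxdef
    have hMx2 : 2 ≤ Mx := le_trans (by omega) (Nat.le_findGreatest htn hPt)
    have hPMx : P Mx := Nat.findGreatest_spec (m := ℓ t) htn hPt
    have hMxn : Mx ≤ n := Nat.findGreatest_le n
    have hmax : ∀ s ∈ S, ℓ s ≤ Mx := by
      intro s hsS
      by_contra hgt
      exact Nat.findGreatest_is_greatest (P := P) (by omega) (hb s hsS) ⟨s, hsS, le_rfl⟩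
    obtain ⟨t₀, ht₀S, ht₀ge⟩ := hPMx
    have ht₀len : ℓ t₀ = Mx := le_antisymm (hmax t₀ ht₀S) ht₀ge
    obtain ⟨i, a, Mid, ha1, hMred, hMne, hhead, hlast, ht₀eq, ht₀len'⟩ :=
      conj_form hb ht₀S (by omega)
    have hMidlen : Mid.length + 2 = Mx := by omega
    -- every length-one element of S is a letter of index i
    have K1 : ∀ s ∈ S, ℓ s = 1 → ∃ b : M i, s = of b := by
      intro s hsS h1
      obtain ⟨j, b, hbne, rfl⟩ := eq_of_ℓ_eq_one h1
      by_cases hij : j = i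
      · subst hij; exact ⟨b, rfl⟩
      exfalso
      have hmem : t₀ * of b ∈ S := mul_mem ht₀S hsS
      have hred : Red ((⟨i, a⟩ : Σ i, M i) :: ((Mid ++ [⟨i, a⁻¹⟩]) ++ [⟨j, b⟩])) := by
        refine red_cons_concat ha1 hbne ?_ ?_ ?_ (by simp)
        · rw [red_append]
          exact ⟨hMred, red_singleton (by simpa using inv_ne_one.2 ha1),
            fun l hl z hz => by simp at hz; subst hz; exact hlast l hl⟩
        · intro l hl
          rw [List.head?_append_of_ne_nil _ hMne] at hl
          exact (hhead l hl).symm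
        · intro l hl
          rw [List.getLast?_concat] at hl
          simp only [Option.mem_def, Option.some.injEq] at hl
          subst hl
          simpa using fun h => hij h.symm
      have heq : t₀ * of b =
          prodL ((⟨i, a⟩ : Σ i, M i) :: ((Mid ++ [⟨i, a⁻¹⟩]) ++ [⟨j, b⟩])) := by
        rw [prodL_cons_concat, prodL_append, prodL_singleton, ht₀eq]
        simp [mul_assoc]
      have hfin := hmax _ hmem
      rw [heq, len_prodL hred] at hfin
      simp at hfin
      omega
    -- every long element of S is a sandwich with the same conjugating letter a
    have K2 : ∀ s ∈ S, 2 ≤ ℓ s → ∃ mid' : List (Σ i, M i), Red mid' ∧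
        s = of a * prodL mid' * of a⁻¹ ∧ ℓ s = mid'.length + 2 := by
      intro s hsS h2
      obtain ⟨j, b, mid', hb1, hmred, hmne, hmhead, hmlast, hseq, hslen⟩ :=
        conj_form hb hsS h2
      obtain ⟨c₀, mid'', hmid'eq⟩ := List.exists_cons_of_ne_nil hmne
      by_cases hij : j = i
      case neg =>
        exfalso
        have hmem : t₀ * s ∈ S := mul_mem ht₀S hsS
        have hred : Red ((⟨i, a⟩ : Σ i, M i) ::
            (((Mid ++ [⟨i, a⁻¹⟩]) ++ (⟨j, b⟩ :: mid')) ++ [⟨j, b⁻¹⟩])) := by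
          refine red_cons_concat ha1 (by simpa using inv_ne_one.2 hb1) ?_ ?_ ?_ (by simp)
          · refine red_append.mpr ⟨red_append.mpr ⟨hMred,
              red_singleton (by simpa using inv_ne_one.2 ha1),
              fun l hl z hz => by simp at hz; subst hz; exact hlast l hl⟩,
              red_cons.mpr ⟨hb1, fun y hy => (hmhead y hy).symm, hmred⟩, ?_⟩
            intro x hx y hy
            rw [List.getLast?_concat] at hx
            simp only [List.head?_cons, Option.mem_def, Option.some.injEq] at hx hy
            subst hx; subst hy
            simpa using fun h => hij h.symm
          · intro l hl
            rw [List.head?_append_of_ne_nil _ (by simp),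
              List.head?_append_of_ne_nil _ hMne] at hl
            exact (hhead l hl).symm
          · intro l hl
            rw [List.getLast?_append_of_ne_nil _ (by simp), hmid'eq,
              List.getLast?_cons_cons] at hl
            exact hmlast l (by rw [hmid'eq]; exact hl)
        have heq : t₀ * s = prodL ((⟨i, a⟩ : Σ i, M i) ::
            (((Mid ++ [⟨i, a⁻¹⟩]) ++ (⟨j, b⟩ :: mid')) ++ [⟨j, b⁻¹⟩])) := by
          rw [prodL_cons_concat, prodL_append, prodL_append, prodL_singleton, prodL_cons,
            ht₀eq, hseq]
          simp [mul_assoc]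
        have hfin := hmax _ hmem
        rw [heq, len_prodL hred] at hfin
        simp at hfin
        omega
      case pos =>
        obtain rfl := hij.symm
        by_cases hab : b = a
        case pos =>
          subst hab
          exact ⟨mid', hmred, hseq, hslen⟩
        case neg =>
          exfalso
          have hmem : t₀ * s ∈ S := mul_mem ht₀S hsS
          have hc : a⁻¹ * b ≠ 1 := by
            intro h
            exact hab (by rwa [inv_mul_eq_one, eq_comm] at h)
          have hred : Red ((⟨i, a⟩ : Σ i, M i) ::
              ((Mid ++ (⟨i, a⁻¹ * b⟩ :: mid')) ++ [⟨i, b⁻¹⟩])) := by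
            refine red_cons_concat ha1 (by simpa using inv_ne_one.2 hb1) ?_ ?_ ?_ (by simp)
            · refine red_append.mpr ⟨hMred,
                red_cons.mpr ⟨hc, fun y hy => (hmhead y hy).symm, hmred⟩, ?_⟩
              intro x hx y hy
              simp only [List.head?_cons, Option.mem_def, Option.some.injEq] at hy
              subst hy
              exact hlast x hx
            · intro l hl
              rw [List.head?_append_of_ne_nil _ hMne] at hl
              exact (hhead l hl).symm
            · intro l hl
              rw [List.getLast?_append_of_ne_nil _ (by simp), hmid'eq,
                List.getLast?_cons_cons] at hl
              exact hmlast l (by rw [hmid'eq]; exact hl)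
          have heq : t₀ * s = prodL ((⟨i, a⟩ : Σ i, M i) ::
              ((Mid ++ (⟨i, a⁻¹ * b⟩ :: mid')) ++ [⟨i, b⁻¹⟩])) := by
            rw [prodL_cons_concat, prodL_append, prodL_cons, ht₀eq, hseq]
            simp only [map_mul]
            simp [mul_assoc]
          have hfin := hmax _ hmem
          rw [heq, len_prodL hred] at hfin
          simp at hfin
          omega
    -- conjugate by (of a)⁻¹ and apply the induction hypothesis
    set z₁ : CoprodI M := (of a)⁻¹ with hz₁
    set S₁ := S.map (MulAut.conj z₁).toMonoidHom with hS₁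
    have hb₁ : ∀ s₁ ∈ S₁, ℓ s₁ ≤ Mx - 1 := by
      intro s₁ hs₁
      rw [hS₁, Subgroup.mem_map] at hs₁
      obtain ⟨s, hsS, rfl⟩ := hs₁
      have hval : (MulAut.conj z₁).toMonoidHom s = z₁ * s * z₁⁻¹ := rfl
      rw [hval]
      rcases Nat.lt_or_ge (ℓ s) 2 with hcase | hcase
      · rcases Nat.lt_or_ge (ℓ s) 1 with hc0 | hc1
        · have h' : s = 1 := eq_one_of_ℓ_eq_zero (Nat.lt_one_iff.mp hc0)
          rw [h']
          simp [ℓ_one]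
        · have h1 : ℓ s = 1 := by omega
          obtain ⟨b, rfl⟩ := K1 s hsS h1
          have : z₁ * of b * z₁⁻¹ = of (a⁻¹ * b * a) := by
            rw [hz₁]
            simp [map_mul, map_inv]
          rw [this]
          have := ℓ_of_le (i := i) (a⁻¹ * b * a)
          omega
      · obtain ⟨mid', hmred, hseq, hslen⟩ := K2 s hsS hcase
        have : z₁ * s * z₁⁻¹ = prodL mid' := by
          rw [hseq, hz₁]
          simp [mul_assoc]
        rw [this, len_prodL hmred]
        have := hmax s hsS
        omega
    obtain ⟨i', z₂, hz₂⟩ := IH (Mx - 1) (by omega) S₁ hb₁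
    refine ⟨i', z₂ * z₁, fun s hsS => ?_⟩
    have hmem₁ : z₁ * s * z₁⁻¹ ∈ S₁ := by
      rw [hS₁, Subgroup.mem_map]
      exact ⟨s, hsS, rfl⟩
    obtain ⟨m, hm⟩ := hz₂ _ hmem₁
    refine ⟨m, ?_⟩
    rw [hm, mul_inv_rev]
    simp [mul_assoc]

section Transfer

variable {G : Type u_5} {K : Type u_6} [Group G] [Group K]

/-- the binary family -/
def Fam (G : Type u_5) (K : Type u_6) : Bool → Type (max u_5 u_6) := fun b =>
  Bool.rec (ULift K) (ULift G) b

instance famGroup : ∀ b, Group (Fam G K b) := fun b =>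
  Bool.rec (inferInstance : Group (ULift K)) (inferInstance : Group (ULift G)) b

noncomputable instance famDec : ∀ b, DecidableEq (Fam G K b) := fun _ => Classical.decEq _

/-- up homomorphisms -/
def upG : G →* ULift G := (MulEquiv.ulift.symm : G ≃* ULift G).toMonoidHom
def upK : K →* ULift K := (MulEquiv.ulift.symm : K ≃* ULift K).toMonoidHom

/-- the forward homomorphism -/
noncomputable def fwd : Monoid.Coprod G K →* CoprodI (Fam G K) :=
  Coprod.lift ((of (M := Fam G K) (i := true)).comp upG)
    ((of (M := Fam G K) (i := false)).comp upK)

/-- the backward homomorphism -/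
noncomputable def bwd : CoprodI (Fam G K) →* Monoid.Coprod G K :=
  CoprodI.lift (fun b => Bool.rec (motive := fun b => Fam G K b →* Monoid.Coprod G K)
    ((Coprod.inr : K →* Monoid.Coprod G K).comp (MulEquiv.ulift : ULift K ≃* K).toMonoidHom)
    ((Coprod.inl : G →* Monoid.Coprod G K).comp (MulEquiv.ulift : ULift G ≃* G).toMonoidHom) b)

theorem fwd_inl (g : G) : fwd (G := G) (K := K) (Coprod.inl g) = of (i := true) (upG g) := by
  simp [fwd]
  rfl

theorem fwd_inr (k : K) : fwd (G := G) (K := K) (Coprod.inr k) = of (i := false) (upK k) := by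
  simp [fwd]
  rfl

theorem bwd_of_true (g : ULift G) :
    bwd (G := G) (K := K) (of (i := true) g) = Coprod.inl g.down := by
  simp [bwd, CoprodI.lift_of]
  rfl

theorem bwd_of_false (k : ULift K) :
    bwd (G := G) (K := K) (of (i := false) k) = Coprod.inr k.down := by
  simp [bwd, CoprodI.lift_of]
  rfl

theorem bwd_fwd (x : Monoid.Coprod G K) : bwd (fwd x) = x := by
  induction x using Coprod.induction_on with
  | inl g => rw [fwd_inl, bwd_of_true]; rfl
  | inr k => rw [fwd_inr, bwd_of_false]; rfl
  | mul x y hx hy => rw [map_mul, map_mul, hx, hy]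

end Transfer

end Stmt0Aux

open Stmt0Aux Monoid.CoprodI in
/-- If the word length function of the free product `G ∗ K` is bounded on a
subgroup `S`, then `S` is conjugate to a subgroup of `G` or of `K`. Boundedness of the word
length by `N` is expressed as: every element of `S` is a product of at most `N` letters,
each letter coming from `G` or from `K`. -/
theorem stmt0 {G K : Type*} [Group G] [Group K] (S : Subgroup (Monoid.Coprod G K)) (N : ℕ)
    (hbound : ∀ s ∈ S, ∃ l : List (Monoid.Coprod G K),
      (∀ x ∈ l, (∃ g : G, x = Monoid.Coprod.inl g) ∨ (∃ k : K, x = Monoid.Coprod.inr k)) ∧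
        l.prod = s ∧ l.length ≤ N) :
    ∃ z : Monoid.Coprod G K,
      S.map (MulAut.conj z).toMonoidHom ≤ (Monoid.Coprod.inl : G →* Monoid.Coprod G K).range ∨
      S.map (MulAut.conj z).toMonoidHom ≤ (Monoid.Coprod.inr : K →* Monoid.Coprod G K).range := by
  classical
  set S' := S.map (fwd (G := G) (K := K)) with hS'
  have hb' : ∀ s' ∈ S', ℓ s' ≤ N := by
    intro s' hs'
    rw [hS', Subgroup.mem_map] at hs'
    obtain ⟨s, hsS, rfl⟩ := hs'
    obtain ⟨l, hlmem, hlprod, hllen⟩ := hbound s hsS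
    have heq : fwd s = (l.map (fwd (G := G) (K := K))).prod := by
      rw [← hlprod, map_list_prod]
    rw [heq]
    have hlet : ∀ x ∈ l.map (fwd (G := G) (K := K)),
        ∃ i, ∃ m : Fam G K i, x = of m := by
      intro x hx
      rw [List.mem_map] at hx
      obtain ⟨y, hy, rfl⟩ := hx
      rcases hlmem y hy with ⟨g, rfl⟩ | ⟨k, rfl⟩
      · exact ⟨true, upG g, fwd_inl g⟩
      · exact ⟨false, upK k, fwd_inr k⟩
    refine le_trans (ℓ_listprod_le _ hlet) (by simpa using hllen)
  obtain ⟨i, z', hz'⟩ := core (M := Fam G K) N S' hb'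
  refine ⟨bwd z', ?_⟩
  cases i
  case true =>
    left
    intro x hx
    rw [Subgroup.mem_map] at hx
    obtain ⟨s, hsS, rfl⟩ := hx
    obtain ⟨m, hm⟩ := hz' _ (Subgroup.mem_map.mpr ⟨s, hsS, rfl⟩)
    refine ⟨m.down, ?_⟩
    have h1 : Monoid.Coprod.inl m.down = bwd (of (i := true) m) := (bwd_of_true m).symm
    rw [h1, hm, map_mul, map_mul, map_inv, bwd_fwd]
    rfl
  case false =>
    right
    intro x hx
    rw [Subgroup.mem_map] at hx
    obtain ⟨s, hsS, rfl⟩ := hx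
    obtain ⟨m, hm⟩ := hz' _ (Subgroup.mem_map.mpr ⟨s, hsS, rfl⟩)
    refine ⟨m.down, ?_⟩
    have h1 : Monoid.Coprod.inr m.down = bwd (of (i := false) m) := (bwd_of_false m).symm
    rw [h1, hm, map_mul, map_mul, map_inv, bwd_fwd]
    rfl
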